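/- The determinant of the S×S matrix M with diagonal entries 1 and off-diagonal entries M_{ij} = -x_i (for i ≠ j) equals 1 - σ₂ - 2σ₃ - ... - (S-1)σ_S, i.e., det M = Σ_{j=0}^{S} (1-j)σ_j, where σ_j is the j-th elementary symmetric polynomial in x₁,...,x_S. -/

import Mathlib

open Finset

/-- The j-th elementary symmetric polynomial of `x 0, ..., x (S-1)`. -/
def esym {R : Type*} [CommRing R] (S : ℕ) (x : Fin S → R) (j : ℕ) : R :=
  ∑ t ∈ Finset.univ.powersetCard j, ∏ i ∈ t, x i

section aux

variable {R : Type*} [CommRing R] {n : Type*} [Fintype n] [DecidableEq n]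

lemma aux_swap (x : n → R) :
    ∑ i : n, ∑ t ∈ (Finset.univ.erase i).powerset, ∏ k ∈ insert i t, x k
      = ∑ t ∈ (Finset.univ : Finset n).powerset, (t.card : R) * ∏ k ∈ t, x k := by
  rw [Finset.sum_sigma']
  have : ∀ t ∈ (Finset.univ : Finset n).powerset,
      (t.card : R) * ∏ k ∈ t, x k = ∑ i ∈ t, ∏ k ∈ t, x k := by
    intro t _
    rw [Finset.sum_const, nsmul_eq_mul]
  rw [Finset.sum_congr rfl this, Finset.sum_sigma']
  refine Finset.sum_nbij' (fun p => ⟨insert p.1 p.2, p.1⟩) (fun p => ⟨p.2, p.1.erase p.2⟩)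
    ?_ ?_ ?_ ?_ ?_
  · rintro ⟨i, t⟩ hp
    simp only [Finset.mem_sigma, Finset.mem_powerset] at hp ⊢
    exact ⟨Finset.subset_univ _, Finset.mem_insert_self _ _⟩
  · rintro ⟨t, i⟩ hp
    refine Finset.mem_sigma.mpr ⟨Finset.mem_univ _, Finset.mem_powerset.mpr fun a ha => ?_⟩
    exact Finset.mem_erase.mpr ⟨(Finset.mem_erase.mp ha).1, Finset.mem_univ _⟩
  · rintro ⟨i, t⟩ hp
    simp only [Finset.mem_sigma, Finset.mem_powerset] at hp
    have hi : i ∉ t := fun h => (Finset.mem_erase.mp (hp.2 h)).1 rfl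
    simp [Finset.erase_insert hi]
  · rintro ⟨t, i⟩ hp
    simp only [Finset.mem_sigma, Finset.mem_powerset] at hp
    simp [Finset.insert_erase hp.2]
  · rintro ⟨i, t⟩ _
    rfl

lemma aux_prod (x : n → R) :
    ∏ i : n, (1 + x i) = ∑ t ∈ (Finset.univ : Finset n).powerset, ∏ k ∈ t, x k := by
  have := Finset.prod_add x (fun _ => (1 : R)) (Finset.univ : Finset n)
  simp only [Finset.prod_const_one, mul_one] at this
  rw [← this]
  exact Finset.prod_congr rfl fun i _ => by ring

lemma aux_prod_erase (x : n → R) (i : n) :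
    ∏ k ∈ Finset.univ.erase i, (1 + x k)
      = ∑ t ∈ (Finset.univ.erase i).powerset, ∏ k ∈ t, x k := by
  have := Finset.prod_add x (fun _ => (1 : R)) (Finset.univ.erase i)
  simp only [Finset.prod_const_one, mul_one] at this
  rw [← this]
  exact Finset.prod_congr rfl fun k _ => by ring

lemma det_updateRow_one_ones (i : n) :
    ((1 : Matrix n n R).updateRow i (fun _ => 1)).det = 1 := by
  have h : (fun _ => (1 : R)) = ∑ k : n, (fun _ => (1:R)) k • (1 : Matrix n n R) k := by
    funext j
    rw [Finset.sum_apply]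
    simp [Finset.sum_apply, Matrix.one_apply]
  rw [h, Matrix.det_updateRow_sum]
  simp

lemma detRow_eq (M : Matrix n n R) : Matrix.detRowAlternating M = M.det := rfl

lemma det_M (x : n → R) :
    (Matrix.of fun i j => if i = j then (1 : R) else - x i).det
      = ∏ i : n, (1 + x i) + ∑ i : n, (- x i) * ∏ k ∈ Finset.univ.erase i, (1 + x k) := by
  classical
  set m : n → n → R := fun i => Pi.single i (1 + x i) with hm
  set m' : n → n → R := fun i _ => - x i with hm'
  have hMeq : (Matrix.of fun i j => if i = j then (1 : R) else - x i) = m + m' := by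
    funext i j
    by_cases h : i = j
    · subst h; simp [m, m', Pi.single_apply]
    · simp [m, m', Pi.single_apply, h, Ne.symm h]
  rw [hMeq]
  set F := (Matrix.detRowAlternating (R := R) (n := n)).toMultilinearMap with hFdef
  have hFd : ∀ A : Matrix n n R, F A = A.det := fun _ => rfl
  have expand := F.map_add_univ m m'
  rw [show Matrix.det (m + m') = F (m + m') from rfl, expand]
  have hterm : ∀ s : Finset n,
      F (s.piecewise m m')
        = (∏ i : n, if i ∈ s then (1 + x i) else - x i) •
            F
              (fun i => if i ∈ s then (Pi.single i 1 : n → R) else fun _ => 1) := by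
    intro s
    have hsp : s.piecewise m m'
        = fun i => (if i ∈ s then (1 + x i) else - x i) •
            (if i ∈ s then (Pi.single i 1 : n → R) else fun _ => 1) := by
      funext i
      by_cases h : i ∈ s
      · simp only [Finset.piecewise, h, if_pos]
        funext j
        simp only [m, Pi.smul_apply, smul_eq_mul, Pi.single_apply]
        split <;> ring
      · simp only [Finset.piecewise, h, if_neg, if_false]
        funext j
        simp [m']
    rw [hsp]
    exact F.map_smul_univ _ _
  have hF : ∀ s : Finset n,
      F (s.piecewise m m')
        = (if s = Finset.univ then ∏ i : n, (1 + x i) else 0)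
          + ∑ i : n, (if s = Finset.univ.erase i
              then (- x i) * ∏ k ∈ Finset.univ.erase i, (1 + x k) else 0) := by
    intro s
    rw [hterm s]
    by_cases h1 : s = Finset.univ
    · subst h1
      have hne : ∀ i : n, (Finset.univ : Finset n) ≠ Finset.univ.erase i := by
        intro i h
        have := Finset.card_erase_lt_of_mem (Finset.mem_univ i)
        rw [← h] at this
        omega
      have hB : (fun i => if i ∈ (Finset.univ : Finset n)
          then (Pi.single i 1 : n → R) else fun _ => 1) = (1 : Matrix n n R) := by
        funext i j
        by_cases h : i = j
        · simp [h, Matrix.one_apply, Pi.single_apply]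
        · simp [Matrix.one_apply, Pi.single_apply, h, Ne.symm h]
      rw [hB, hFd]
      simp only [if_pos rfl, Finset.mem_univ, if_true]
      simp [hne, smul_eq_mul]
    · by_cases h2 : ∃ i, s = Finset.univ.erase i
      · obtain ⟨i, rfl⟩ := h2
        have hi : i ∉ Finset.univ.erase i := Finset.notMem_erase i _
        -- scalar
        have hscal : (∏ k : n, if k ∈ Finset.univ.erase i then (1 + x k) else - x k)
            = (- x i) * ∏ k ∈ Finset.univ.erase i, (1 + x k) := by
          rw [← Finset.mul_prod_erase Finset.univ _ (Finset.mem_univ i)]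
          rw [if_neg hi]
          congr 1
          exact Finset.prod_congr rfl fun k hk => if_pos hk
        -- the 0-1 matrix
        have hB : (fun k => if k ∈ Finset.univ.erase i
            then (Pi.single k 1 : n → R) else fun _ => 1)
            = (1 : Matrix n n R).updateRow i (fun _ => 1) := by
          funext a b
          by_cases ha : a = i
          · subst ha
            simp [Matrix.updateRow_apply, hi]
          · by_cases hb : a = b
            · subst hb
              simp [Matrix.updateRow_apply, ha, Matrix.one_apply, Pi.single_apply]
            · simp [Matrix.updateRow_apply, ha, hb, Ne.symm hb, Matrix.one_apply,
                Pi.single_apply]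
        rw [hscal, hB, hFd, det_updateRow_one_ones, smul_eq_mul, mul_one]
        rw [if_neg (fun h => h1 h), Finset.sum_congr rfl
          (fun j _ => if_congr (Finset.erase_inj (Finset.univ : Finset n)
            (Finset.mem_univ i)) rfl rfl)]
        rw [Finset.sum_ite_eq Finset.univ i
          (fun j => (- x j) * ∏ k ∈ Finset.univ.erase j, (1 + x k))]
        simp
      · push_neg at h2
        -- complement has at least two elements
        have hcard : 1 < (Finset.univ \ s).card := by
          rcases Nat.lt_or_ge 1 (Finset.univ \ s).card with h | h
          · exact h
          · exfalso
            interval_cases hc : (Finset.univ \ s).card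
            · have : s = Finset.univ := by
                have h0 : Finset.univ \ s = ∅ := Finset.card_eq_zero.mp hc
                have := Finset.sdiff_sdiff_self_left (Finset.univ : Finset n) s
                rw [h0] at this
                simpa using this.symm
              exact h1 this
            · obtain ⟨i, hiu⟩ := Finset.card_eq_one.mp hc
              have : s = Finset.univ.erase i := by
                have := Finset.sdiff_sdiff_self_left (Finset.univ : Finset n) s
                rw [hiu] at this
                rw [Finset.erase_eq]
                simpa using this.symm
              exact h2 i this
        obtain ⟨a, ha, b, hb, hab⟩ := Finset.one_lt_card.mp hcard
        have has : a ∉ s := (Finset.mem_sdiff.mp ha).2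
        have hbs : b ∉ s := (Finset.mem_sdiff.mp hb).2
        have hzero : F
            (fun k => if k ∈ s then (Pi.single k 1 : n → R) else fun _ => 1) = 0 := by
          show Matrix.detRowAlternating
            (fun k => if k ∈ s then (Pi.single k 1 : n → R) else fun _ => 1) = 0
          apply AlternatingMap.map_eq_zero_of_eq _ _ _ hab
          simp [has, hbs]
        rw [hzero, smul_zero]
        have hifs : ∀ i : n, s ≠ Finset.univ.erase i := h2
        simp [h1, hifs]
  rw [Finset.sum_congr rfl (fun s _ => hF s), Finset.sum_add_distrib]
  congr 1
  · rw [Finset.sum_ite_eq' Finset.univ Finset.univ (fun _ => ∏ i : n, (1 + x i))]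
    simp
  · rw [Finset.sum_comm]
    refine Finset.sum_congr rfl fun i _ => ?_
    rw [Finset.sum_ite_eq' Finset.univ (Finset.univ.erase i)
      (fun _ => (- x i) * ∏ k ∈ Finset.univ.erase i, (1 + x k))]
    simp

end aux

theorem stmt0 {R : Type*} [CommRing R] (S : ℕ) (hS : 1 ≤ S) (x : Fin S → R)
    (M : Matrix (Fin S) (Fin S) R)
    (hM : ∀ i j, M i j = if i = j then 1 else - x i) :
    M.det = ∑ j ∈ Finset.range (S + 1), (1 - (j : R)) * esym S x j := by
  classical
  have hMeq : M = Matrix.of fun i j => if i = j then (1 : R) else - x i := by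
    funext i j; exact hM i j
  rw [hMeq, det_M]
  have h2 : ∑ i : Fin S, (- x i) * ∏ k ∈ Finset.univ.erase i, (1 + x k)
      = - ∑ t ∈ (Finset.univ : Finset (Fin S)).powerset, (t.card : R) * ∏ k ∈ t, x k := by
    rw [← aux_swap]
    rw [← Finset.sum_neg_distrib]
    refine Finset.sum_congr rfl fun i _ => ?_
    rw [aux_prod_erase, Finset.mul_sum, ← Finset.sum_neg_distrib]
    refine Finset.sum_congr rfl fun t ht => ?_
    have hit : i ∉ t := fun h =>
      (Finset.mem_erase.mp ((Finset.mem_powerset.mp ht) h)).1 rfl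
    rw [Finset.prod_insert hit]
    ring
  rw [aux_prod, h2]
  rw [← sub_eq_add_neg, ← Finset.sum_sub_distrib]
  have hrw : (∑ t ∈ (Finset.univ : Finset (Fin S)).powerset,
      ((∏ k ∈ t, x k) - (t.card : R) * ∏ k ∈ t, x k))
        = ∑ t ∈ (Finset.univ : Finset (Fin S)).powerset,
            (1 - (t.card : R)) * ∏ k ∈ t, x k :=
    Finset.sum_congr rfl fun t _ => by ring
  rw [hrw, Finset.sum_powerset]
  rw [Finset.card_univ, Fintype.card_fin]
  refine Finset.sum_congr rfl fun j _ => ?_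
  unfold esym
  rw [Finset.mul_sum]
  refine Finset.sum_congr rfl fun t ht => ?_
  rw [(Finset.mem_powersetCard.mp ht).2]
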